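/- Let a ∈ A have spectrum consisting of a sequence of distinct nonzero points λ_1, λ_2, … together with their only cluster point 0. Let p_i = p(λ_i, a) and a_n = ∑_{i=1}^n λ_i p_i. Then σ(a - a_n) ⊆ {λ_{n+1}, λ_{n+2}, …} ∪ {0}, and consequently the spectral radius r_σ(a - a_n) → 0 as n → ∞. -/

import Mathlib

noncomputable def rieszProj {A : Type*} [NormedRing A] [NormedAlgebra ℂ A]
    (a : A) (c : ℂ) (R : ℝ) : A :=
  (2 * Real.pi * Complex.I)⁻¹ • ∮ z in C(c, R), Ring.inverse (algebraMap ℂ A z - a)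

lemma map_ringInverse_of_isUnit {R S : Type*} [Ring R] [Ring S] (f : R →+* S) {x : R}
    (hx : IsUnit x) : f (Ring.inverse x) = Ring.inverse (f x) := by
  have h1 : f x * f (Ring.inverse x) = 1 := by
    rw [← map_mul, Ring.mul_inverse_cancel x hx, map_one]
  have h2 : f (Ring.inverse x) * f x = 1 := by
    rw [← map_mul, Ring.inverse_mul_cancel x hx, map_one]
  have h3 : f (Ring.inverse x) = (((⟨f x, f (Ring.inverse x), h1, h2⟩ : Sˣ))⁻¹ : Sˣ) := rfl
  rw [h3, ← Ring.inverse_unit]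

lemma commute_ringInverse {M : Type*} [MonoidWithZero M] {x y : M} (h : Commute x y)
    (hy : IsUnit y) : Commute x (Ring.inverse y) := by
  have h' : Commute x (hy.unit : M) := by rwa [IsUnit.unit_spec]
  have h2 := h'.units_inv_right
  rwa [← Ring.inverse_unit hy.unit, IsUnit.unit_spec] at h2

open intervalIntegral in
lemma clm_circleIntegral_comm {E F : Type*} [NormedAddCommGroup E] [NormedSpace ℂ E]
    [CompleteSpace E] [NormedAddCommGroup F] [NormedSpace ℂ F] [CompleteSpace F]
    (L : E →L[ℂ] F) {f : ℂ → E} {c : ℂ} {r : ℝ} (hf : CircleIntegrable f c r) :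
    (∮ z in C(c, r), L (f z)) = L (∮ z in C(c, r), f z) := by
  simp only [circleIntegral]
  rw [← L.intervalIntegral_comp_comm hf.out]
  simp only [map_smul]

open Metric in
lemma circleIntegral_sub_inv_of_not_mem {c w : ℂ} {r : ℝ} (hr : 0 < r)
    (hw : w ∉ closedBall c r) : (∮ z in C(c, r), (z - w)⁻¹) = 0 := by
  apply Complex.circleIntegral_eq_zero_of_differentiable_on_off_countable hr.le
    (Set.countable_empty (α := ℂ))
  · intro z hz
    have hzw : z ≠ w := fun h => hw (h ▸ hz)
    exact ((continuousAt_id.sub continuousAt_const).inv₀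
      (sub_ne_zero.mpr hzw)).continuousWithinAt
  · intro z hz
    have hzw : z ≠ w := fun h => hw (h ▸ ball_subset_closedBall hz.1)
    exact (differentiableAt_id.sub_const w).inv (sub_ne_zero.mpr hzw)

lemma closure_comm {A : Type*} [NormedRing A] {S : Set A}
    (hS : ∀ x ∈ S, ∀ y ∈ S, x * y = y * x) :
    ∀ x ∈ closure S, ∀ y ∈ closure S, x * y = y * x := by
  have h1 : ∀ x ∈ S, ∀ y ∈ closure S, x * y = y * x := by
    intro x hx
    have hcl : IsClosed {y : A | x * y = y * x} :=
      isClosed_eq (continuous_const.mul continuous_id) (continuous_id.mul continuous_const)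
    exact fun y hy => closure_minimal (fun y' hy' => hS x hx y' hy') hcl hy
  intro x hx y hy
  have hcl : IsClosed {x' : A | x' * y = y * x'} :=
    isClosed_eq (continuous_id.mul continuous_const) (continuous_const.mul continuous_id)
  exact closure_minimal (fun x' hx' => h1 x' hx' y hy) hcl hx

/-- Key lemma: in a commutative complex Banach algebra, spectrum of the compressed element. -/
lemma key_spectrum {B : Type*} [NormedRing B] [NormedAlgebra ℂ B] [CompleteSpace B]
    [Nontrivial B] (hBcomm : ∀ x y : B, x * y = y * x) (b : B) (lam : ℕ → ℂ) (hinj : Function.Injective lam) (hne : ∀ i, lam i ≠ 0)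
    (R : ℕ → ℝ) (hRpos : ∀ i, 0 < R i)
    (hspecb : spectrum ℂ b ⊆ {0} ∪ Set.range lam)
    (hiso : ∀ i, ∀ w ∈ ({0} ∪ Set.range lam : Set ℂ), ‖w - lam i‖ ≤ R i → w = lam i)
    (hsph : ∀ i, ∀ z ∈ Metric.sphere (lam i) (R i), IsUnit (algebraMap ℂ B z - b)) (N : ℕ) :
    spectrum ℂ (b - ∑ i ∈ Finset.range N, lam i • rieszProj b (lam i) (R i)) ⊆
      {0} ∪ lam '' {i | N ≤ i} := by
  classical
  set fB : ℂ → B := fun z => Ring.inverse (algebraMap ℂ B z - b) with hfBdef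
  have hci : ∀ i, CircleIntegrable fB (lam i) (R i) := by
    intro i
    apply ContinuousOn.circleIntegrable (hRpos i).le
    intro z hz
    have hu := hsph i z hz
    apply ContinuousAt.continuousWithinAt
    have h1 : ContinuousAt (fun w : ℂ => algebraMap ℂ B w - b) z :=
      ((continuous_algebraMap ℂ B).continuousAt).sub continuousAt_const
    have h2 : ContinuousAt (Ring.inverse : B → B) (algebraMap ℂ B z - b) := by
      have h3 := NormedRing.inverse_continuousAt hu.unit
      rwa [IsUnit.unit_spec] at h3
    exact ContinuousAt.comp (g := (Ring.inverse : B → B))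
      (f := fun w : ℂ => algebraMap ℂ B w - b) (x := z) h2 h1
  intro z hz
  set bB : B := ∑ i ∈ Finset.range N, lam i • rieszProj b (lam i) (R i) with hbBdef
  letI : NormedCommRing B := { ‹NormedRing B› with mul_comm := hBcomm }
  obtain ⟨φ, hφ⟩ := WeakDual.CharacterSpace.mem_spectrum_iff_exists.mp hz
  set w : ℂ := φ b with hwdef
  have hw : w ∈ ({0} ∪ Set.range lam : Set ℂ) :=
    hspecb (WeakDual.CharacterSpace.apply_mem_spectrum φ b)
  set Φ : B →L[ℂ] ℂ :=
    { toFun := φ, map_add' := map_add φ, map_smul' := map_smul φ,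
      cont := map_continuous φ } with hΦdef
  have hφp : ∀ i, φ (rieszProj b (lam i) (R i)) = if w = lam i then 1 else 0 := by
    intro i
    have h1 : φ (rieszProj b (lam i) (R i)) =
        (2 * Real.pi * Complex.I)⁻¹ • ∮ z' in C(lam i, R i), (z' - w)⁻¹ := by
      have h2 : φ (rieszProj b (lam i) (R i)) = Φ (rieszProj b (lam i) (R i)) := rfl
      rw [h2]
      unfold rieszProj
      rw [map_smul, ← clm_circleIntegral_comm Φ (hci i)]
      congr 1
      refine circleIntegral.integral_congr (hRpos i).le fun z' hz' => ?_
      have hu := hsph i z' hz'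
      have h3 : φ (algebraMap ℂ B z' - b) = z' - w := by
        rw [map_sub, AlgHomClass.commutes]
        simp [hwdef]
      have h4 : φ (algebraMap ℂ B z' - b) * φ (fB z') = 1 := by
        rw [← map_mul, hfBdef, Ring.mul_inverse_cancel _ hu, map_one]
      rw [h3] at h4
      show φ (fB z') = (z' - w)⁻¹
      exact eq_inv_of_mul_eq_one_left (by rw [mul_comm] at h4; exact h4)
    by_cases hwb : w ∈ Metric.ball (lam i) (R i)
    · have hweq : w = lam i := by
        apply hiso i w hw
        rw [Metric.mem_ball, Complex.dist_eq] at hwb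
        exact hwb.le
      rw [h1, circleIntegral.integral_sub_inv_of_mem_ball hwb, if_pos hweq, smul_eq_mul,
        inv_mul_cancel₀ Complex.two_pi_I_ne_zero]
    · have hne' : w ≠ lam i := by
        intro h
        exact hwb (h ▸ Metric.mem_ball_self (hRpos i))
      have houts : w ∉ Metric.closedBall (lam i) (R i) := by
        intro hmem
        rw [Metric.mem_closedBall, Complex.dist_eq] at hmem
        exact hne' (hiso i w hw hmem)
      rw [h1, circleIntegral_sub_inv_of_not_mem (hRpos i) houts, smul_zero, if_neg hne']
  have hφb : φ bB = ∑ i ∈ Finset.range N, if w = lam i then lam i else 0 := by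
    rw [hbBdef, map_sum]
    refine Finset.sum_congr rfl fun i _ => ?_
    rw [map_smul, hφp i, smul_eq_mul]
    by_cases h : w = lam i <;> simp [h]
  have hz' : z = w - φ bB := by rw [← hφ, map_sub]
  rcases hw with h0 | ⟨j, hj⟩
  · rw [Set.mem_singleton_iff] at h0
    have hb0 : φ bB = 0 := by
      rw [hφb]
      apply Finset.sum_eq_zero
      intro i _
      rw [if_neg (h0 ▸ fun h => (hne i) h.symm)]
    left
    rw [Set.mem_singleton_iff, hz', hb0, h0, sub_zero]
  · have hcond : ∀ i, (if w = lam i then lam i else 0) = if j = i then lam i else 0 := by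
      intro i
      by_cases h : j = i
      · rw [if_pos h, if_pos (h ▸ hj.symm)]
      · rw [if_neg h, if_neg fun hh => h (hinj ((hj.trans hh)))]
    have hbsum : φ bB = if j ∈ Finset.range N then lam j else 0 := by
      rw [hφb, Finset.sum_congr rfl fun i _ => hcond i, Finset.sum_ite_eq]
    by_cases hjN : j < N
    · left
      rw [Set.mem_singleton_iff, hz', hbsum, if_pos (Finset.mem_range.mpr hjN), ← hj, sub_self]
    · right
      refine ⟨j, ?_, ?_⟩
      · simpa using Nat.le_of_not_lt hjN
      · rw [hz', hbsum, if_neg (fun hc => hjN (Finset.mem_range.mp hc)), sub_zero, hj]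

open Filter in
theorem stmt_14 {A : Type*} [NormedRing A] [NormedAlgebra ℂ A] [CompleteSpace A]
    (a : A) (lam : ℕ → ℂ) (hinj : Function.Injective lam) (hne : ∀ i, lam i ≠ 0)
    (hlim : Tendsto lam atTop (nhds 0))
    (hspec : spectrum ℂ a = {0} ∪ Set.range lam)
    (R : ℕ → ℝ) (hRpos : ∀ i, 0 < R i)
    (hiso : ∀ i, ∀ z ∈ spectrum ℂ a, ‖z - lam i‖ ≤ R i → z = lam i) :
    (∀ N : ℕ,
      spectrum ℂ (a - ∑ i ∈ Finset.range N, lam i • rieszProj a (lam i) (R i)) ⊆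
        {0} ∪ lam '' {i | N ≤ i}) ∧
    Tendsto
      (fun N : ℕ =>
        (spectralRadius ℂ (a - ∑ i ∈ Finset.range N, lam i • rieszProj a (lam i) (R i))).toReal)
      atTop (nhds 0) := by
  classical
  have h0mem : (0 : ℂ) ∈ spectrum ℂ a := hspec ▸ Or.inl rfl
  have hA : Nontrivial A := by
    by_contra h
    rw [not_nontrivial_iff_subsingleton] at h
    exact spectrum.notMem_iff.mpr (isUnit_of_subsingleton _) h0mem
  have hsph : ∀ i, ∀ z ∈ Metric.sphere (lam i) (R i), z ∉ spectrum ℂ a := by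
    intro i z hz hmem
    rw [Metric.mem_sphere, Complex.dist_eq] at hz
    have hzi : z = lam i := hiso i z hmem hz.le
    rw [hzi, sub_self, norm_zero] at hz
    exact (hRpos i).ne hz
  set s : Set A :=
    {a} ∪ {x | ∃ z, z ∉ spectrum ℂ a ∧ x = Ring.inverse (algebraMap ℂ A z - a)} with hsdef
  have hcomm_a : ∀ z, z ∉ spectrum ℂ a → Commute a (Ring.inverse (algebraMap ℂ A z - a)) := by
    intro z hz
    have hu : IsUnit (algebraMap ℂ A z - a) := spectrum.notMem_iff.mp hz
    exact commute_ringInverse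
      ((Algebra.commute_algebraMap_right z a).sub_right (Commute.refl a)) hu
  have hcomm_res : ∀ z₁, z₁ ∉ spectrum ℂ a → ∀ z₂, z₂ ∉ spectrum ℂ a →
      Commute (Ring.inverse (algebraMap ℂ A z₁ - a)) (Ring.inverse (algebraMap ℂ A z₂ - a)) := by
    intro z₁ h₁ z₂ h₂
    have hu₁ : IsUnit (algebraMap ℂ A z₁ - a) := spectrum.notMem_iff.mp h₁
    have hu₂ : IsUnit (algebraMap ℂ A z₂ - a) := spectrum.notMem_iff.mp h₂
    have hc : Commute (algebraMap ℂ A z₁ - a) (algebraMap ℂ A z₂ - a) :=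
      ((Algebra.commute_algebraMap_left z₂ (algebraMap ℂ A z₁)).symm.sub_right
          (Algebra.commute_algebraMap_left z₁ a)).sub_left
        ((Algebra.commute_algebraMap_right z₂ a).sub_right (Commute.refl a))
    exact ((commute_ringInverse ((commute_ringInverse hc hu₂).symm) hu₁).symm)
  have hcomm : ∀ x ∈ s, ∀ y ∈ s, x * y = y * x := by
    rintro x (rfl | ⟨z₁, hz₁, rfl⟩) y (rfl | ⟨z₂, hz₂, rfl⟩)
    · rfl
    · exact hcomm_a z₂ hz₂
    · exact (hcomm_a z₁ hz₁).symm
    · exact hcomm_res z₁ hz₁ z₂ hz₂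
  set B0 : Subalgebra ℂ A := Algebra.adjoin ℂ s with hB0def
  have hB0comm : ∀ x ∈ (B0 : Set A), ∀ y ∈ (B0 : Set A), x * y = y * x := by
    intro x hx y hy
    have h1 : ∀ c ∈ s, Commute c x :=
      fun c hc => Algebra.commute_of_mem_adjoin_of_forall_mem_commute hx fun d hd => hcomm c hc d hd
    exact Algebra.commute_of_mem_adjoin_of_forall_mem_commute hy fun d hd => (h1 d hd).symm
  set B : Subalgebra ℂ A := B0.topologicalClosure with hBdef
  have hBcomm : ∀ x y : ↥B, x * y = y * x := by
    intro x y
    apply Subtype.ext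
    have hx : (x : A) ∈ closure (B0 : Set A) := x.2
    have hy : (y : A) ∈ closure (B0 : Set A) := y.2
    exact closure_comm hB0comm x hx y hy
  have haB : a ∈ B := B0.le_topologicalClosure (Algebra.subset_adjoin (Or.inl rfl))
  have hrB : ∀ z, z ∉ spectrum ℂ a → Ring.inverse (algebraMap ℂ A z - a) ∈ B := fun z hz =>
    B0.le_topologicalClosure (Algebra.subset_adjoin (Or.inr ⟨z, hz, rfl⟩))
  haveI instCS : CompleteSpace ↥B := (Subalgebra.isClosed_topologicalClosure B0).completeSpace_coe
  haveI instNT : Nontrivial ↥B := nontrivial_of_ne 0 1 fun h =>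
    (zero_ne_one (α := A)) (congrArg Subtype.val h)
  set aB : ↥B := ⟨a, haB⟩ with haBdef
  have hcoe_sub : ∀ z : ℂ, ((algebraMap ℂ ↥B z - aB : ↥B) : A) = algebraMap ℂ A z - a := by
    intro z
    push_cast
    rfl
  have hresB : ∀ z, z ∉ spectrum ℂ a → IsUnit (algebraMap ℂ ↥B z - aB) := by
    intro z hz
    have hu : IsUnit (algebraMap ℂ A z - a) := spectrum.notMem_iff.mp hz
    refine ⟨⟨algebraMap ℂ ↥B z - aB, ⟨Ring.inverse (algebraMap ℂ A z - a), hrB z hz⟩,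
      ?_, ?_⟩, rfl⟩
    · apply Subtype.ext
      show ((algebraMap ℂ ↥B z - aB : ↥B) : A) * Ring.inverse (algebraMap ℂ A z - a) = 1
      rw [hcoe_sub]
      exact Ring.mul_inverse_cancel _ hu
    · apply Subtype.ext
      show Ring.inverse (algebraMap ℂ A z - a) * ((algebraMap ℂ ↥B z - aB : ↥B) : A) = 1
      rw [hcoe_sub]
      exact Ring.inverse_mul_cancel _ hu
  have hspecB : spectrum ℂ aB ⊆ spectrum ℂ a := by
    intro z hz
    by_contra h
    exact spectrum.notMem_iff.mpr (hresB z h) hz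
  -- Riesz projections inside B, with canonical instances
  have hci : ∀ i, CircleIntegrable
      (fun z => Ring.inverse (algebraMap ℂ ↥B z - aB)) (lam i) (R i) := by
    intro i
    apply ContinuousOn.circleIntegrable (hRpos i).le
    intro z hz
    have hu := hresB z (hsph i z hz)
    have h1 : ContinuousAt (fun w : ℂ => algebraMap ℂ ↥B w - aB) z :=
      ((continuous_algebraMap ℂ ↥B).continuousAt).sub continuousAt_const
    have h2 : ContinuousAt (Ring.inverse : ↥B → ↥B) (algebraMap ℂ ↥B z - aB) := by
      have h3 := NormedRing.inverse_continuousAt hu.unit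
      rwa [IsUnit.unit_spec] at h3
    exact (ContinuousAt.comp (g := (Ring.inverse : ↥B → ↥B))
      (f := fun w : ℂ => algebraMap ℂ ↥B w - aB) (x := z) h2 h1).continuousWithinAt
  set L : ↥B →L[ℂ] A := { B.val.toLinearMap with cont := continuous_subtype_val } with hLdef
  have hpB : ∀ i, ((rieszProj aB (lam i) (R i) : ↥B) : A) = rieszProj a (lam i) (R i) := by
    intro i
    have h0 : ((rieszProj aB (lam i) (R i) : ↥B) : A) = L (rieszProj aB (lam i) (R i)) := rfl
    rw [h0]
    unfold rieszProj
    rw [map_smul, ← clm_circleIntegral_comm L (hci i)]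
    congr 1
    refine circleIntegral.integral_congr (hRpos i).le fun z hz => ?_
    have hu := hresB z (hsph i z hz)
    have h4 := map_ringInverse_of_isUnit (B.val : ↥B →ₐ[ℂ] A).toRingHom hu
    have h5 : (B.val : ↥B →ₐ[ℂ] A).toRingHom (algebraMap ℂ ↥B z - aB) = algebraMap ℂ A z - a :=
      hcoe_sub z
    rw [h5] at h4
    exact h4
  have hcoe_b : ∀ N : ℕ,
      (((aB - ∑ i ∈ Finset.range N, lam i • rieszProj aB (lam i) (R i) : ↥B)) : A) =
        a - ∑ i ∈ Finset.range N, lam i • rieszProj a (lam i) (R i) := by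
    intro N
    push_cast
    congr 1
    exact Finset.sum_congr rfl fun i _ => by rw [hpB i]
  have hsub : ∀ N : ℕ, ∀ z : ℂ,
      z ∈ spectrum ℂ (a - ∑ i ∈ Finset.range N, lam i • rieszProj a (lam i) (R i)) →
      z ∈ spectrum ℂ
        ((aB - ∑ i ∈ Finset.range N, lam i • rieszProj aB (lam i) (R i) : ↥B)) := by
    intro N z hz
    apply AlgHom.spectrum_apply_subset B.val
    show z ∈ spectrum ℂ
      (((aB - ∑ i ∈ Finset.range N, lam i • rieszProj aB (lam i) (R i) : ↥B)) : A)
    rwa [hcoe_b N]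
  have part1 : ∀ N : ℕ,
      spectrum ℂ (a - ∑ i ∈ Finset.range N, lam i • rieszProj a (lam i) (R i)) ⊆
        {0} ∪ lam '' {i | N ≤ i} := by
    intro N z hz
    exact key_spectrum hBcomm aB lam hinj hne R hRpos
      (fun z hz => hspec ▸ hspecB hz)
      (fun i w hw => hiso i w (by rw [hspec]; exact hw))
      (fun i z hz => hresB z (hsph i z hz)) N (hsub N z hz)
  refine ⟨part1, ?_⟩
  rw [Metric.tendsto_atTop]
  intro ε hε
  obtain ⟨M, hM⟩ := (Metric.tendsto_atTop.mp hlim) (ε / 2) (by linarith)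
  refine ⟨M, fun n hn => ?_⟩
  have hbound : spectralRadius ℂ
      (a - ∑ i ∈ Finset.range n, lam i • rieszProj a (lam i) (R i)) ≤
      ENNReal.ofReal (ε / 2) := by
    unfold spectralRadius
    apply iSup₂_le
    intro k hk
    rcases part1 n hk with h0 | ⟨i, hi, hik⟩
    · rw [Set.mem_singleton_iff] at h0
      simp [h0]
    · have hk2 : ‖k‖ ≤ ε / 2 := by
        rw [← hik]
        have h5 := hM i (le_trans hn hi)
        rw [dist_zero_right] at h5
        exact h5.le
      calc ((‖k‖₊ : ENNReal)) = ENNReal.ofReal ‖k‖ := (ofReal_norm_eq_enorm k).symm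
        _ ≤ ENNReal.ofReal (ε / 2) := ENNReal.ofReal_le_ofReal hk2
  have hle : (spectralRadius ℂ
      (a - ∑ i ∈ Finset.range n, lam i • rieszProj a (lam i) (R i))).toReal ≤ ε / 2 := by
    have h6 := ENNReal.toReal_mono ENNReal.ofReal_ne_top hbound
    rwa [ENNReal.toReal_ofReal (by linarith)] at h6
  rw [dist_zero_right, Real.norm_eq_abs, abs_of_nonneg ENNReal.toReal_nonneg]
  linarith
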